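/- Let G : E → Ĥ be a fully faithful pullback-preserving functor between categories with pullbacks, where every morphism of Ĥ is exponentiable. If f : B → A is exponentiable in E, C → B is a morphism, and D is an object over A with G(D) ≅ Π_{G(f)} G(C) over G(A), then D ≅ Π_f C over A. -/

import Mathlib

open CategoryTheory Limits

/-- The pullback functor commutes with `Over.post` of a pullback-preserving functor. -/
noncomputable def postPullbackIso {E : Type*} {H : Type*} [Category E] [Category H]
    [HasPullbacks E] [HasPullbacks H]
    (G : E ⥤ H) [PreservesLimitsOfShape WalkingCospan G] {A B : E} (f : B ⟶ A) :
    Over.pullback f ⋙ Over.post (X := B) G ≅ Over.post (X := A) G ⋙ Over.pullback (G.map f) :=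
  NatIso.ofComponents
    (fun X => Over.isoMk (PreservesPullback.iso G X.hom f)
      (by simp [PreservesPullback.iso_hom_snd]; exact pullbackComparison_comp_snd G X.hom f))
    (by
      intro X Y u
      ext
      change G.map (pullback.lift (pullback.fst X.hom f ≫ u.left) (pullback.snd X.hom f) _) ≫
          (PreservesPullback.iso G Y.hom f).hom =
        (PreservesPullback.iso G X.hom f).hom ≫
          pullback.lift (pullback.fst (G.map X.hom) (G.map f) ≫ G.map u.left) (pullback.snd _ _) _
      apply pullback.hom_ext
      · simp; erw [pullback.lift_fst, pullback.lift_fst]; simp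
      · simp; erw [pullback.lift_snd, pullback.lift_snd]; simp)

lemma ff_symm_comp {E H : Type*} [Category E] [Category H] {F : E ⥤ H}
    (FF : F.FullyFaithful) {X Y Z : E} (u : X ⟶ Y) (s : F.obj Y ⟶ F.obj Z) :
    FF.homEquiv.symm (F.map u ≫ s) = u ≫ FF.homEquiv.symm s := by
  apply FF.map_injective
  simp [Functor.FullyFaithful.homEquiv]

/-- A fully faithful pullback-preserving functor `G : E ⥤ H` into a category in which every
morphism is exponentiable reflects exponentials: if `f : B ⟶ A` is exponentiable in `E`
(with right adjoint `Pf` to pullback), `C` is an object over `B`, and `D` is an object over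
`A` with `G D ≅ Π_{G f}(G C)` over `G A`, then `D ≅ Π_f C` over `A`. -/
theorem reflects_exponentials {E : Type*} {H : Type*} [Category E] [Category H]
    [HasPullbacks E] [HasPullbacks H]
    (G : E ⥤ H) [G.Full] [G.Faithful] [PreservesLimitsOfShape WalkingCospan G]
    (hH : ∀ {X Y : H} (f : X ⟶ Y), (Over.pullback f).IsLeftAdjoint)
    {A B : E} (f : B ⟶ A)
    (Pf : Over B ⥤ Over A) (adj : Over.pullback f ⊣ Pf)
    (Pg : Over (G.obj B) ⥤ Over (G.obj A)) (adj' : Over.pullback (G.map f) ⊣ Pg)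
    (C : Over B) (D : Over A)
    (h : (Over.post G).obj D ≅ Pg.obj ((Over.post G).obj C)) :
    Nonempty (D ≅ Pf.obj C) := by
  let P := Over.post (X := A) G
  let Q := Over.post (X := B) G
  let FFA : P.FullyFaithful := Functor.FullyFaithful.ofFullyFaithful P
  let FFB : Q.FullyFaithful := Functor.FullyFaithful.ofFullyFaithful Q
  let α := postPullbackIso G f
  let e : ∀ Z : Over A, (Z ⟶ D) ≃ (Z ⟶ Pf.obj C) := fun Z =>
    FFA.homEquiv.trans <|
      (Iso.homCongr (Iso.refl (P.obj Z)) h).trans <|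
        (adj'.homEquiv (P.obj Z) (Q.obj C)).symm.trans <|
          (Iso.homCongr (α.app Z).symm (Iso.refl (Q.obj C))).trans <|
            FFB.homEquiv.symm.trans (adj.homEquiv Z C)
  refine ⟨Yoneda.ext D (Pf.obj C) (fun {Z} u => e Z u) (fun {Z} v => (e Z).symm v)
    (fun {Z} u => (e Z).symm_apply_apply u) (fun {Z} v => (e Z).apply_symm_apply v) ?_⟩
  intro Z Z' w g
  show adj.homEquiv Z' C (FFB.homEquiv.symm
      ((α.app Z').symm.inv ≫ ((adj'.homEquiv (P.obj Z') (Q.obj C)).symm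
        ((Iso.refl (P.obj Z')).inv ≫ FFA.homEquiv (w ≫ g) ≫ h.hom)) ≫ (Iso.refl (Q.obj C)).hom))
    = w ≫ adj.homEquiv Z C (FFB.homEquiv.symm
      ((α.app Z).symm.inv ≫ ((adj'.homEquiv (P.obj Z) (Q.obj C)).symm
        ((Iso.refl (P.obj Z)).inv ≫ FFA.homEquiv g ≫ h.hom)) ≫ (Iso.refl (Q.obj C)).hom))
  simp only [Iso.refl_inv, Iso.refl_hom, Category.id_comp, Category.comp_id, Iso.symm_inv,
    Iso.app_hom]
  have h1 : (FFA.homEquiv (w ≫ g) : P.obj Z' ⟶ P.obj D) = P.map w ≫ FFA.homEquiv g := by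
    simp [Functor.FullyFaithful.homEquiv]
  rw [h1, Category.assoc, Adjunction.homEquiv_naturality_left_symm]
  have h3 : α.hom.app Z' ≫ (Over.pullback (G.map f)).map (P.map w) =
      Q.map ((Over.pullback f).map w) ≫ α.hom.app Z := (α.hom.naturality w).symm
  rw [← Category.assoc, h3, Category.assoc, ff_symm_comp, Adjunction.homEquiv_naturality_left]
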